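/- For every positive integer m, there exists a bipartite graph that is not (2m,m)-choosable. Concretely, the graph obtained from C(2m,m) disjoint 4-cycles by identifying one vertex of each (one 4-cycle for each m-element subset S of {1,...,2m}) admits a 2m-list assignment with no m-fold coloring. -/
import Mathlib


def FoldChoosable {V : Type*} (G : SimpleGraph V) (a b : ℕ) : Prop :=
  ∀ L : V → Finset ℕ, (∀ v, (L v).card = a) →
    ∃ φ : V → Finset ℕ, (∀ v, φ v ⊆ L v) ∧ (∀ v, (φ v).card = b) ∧
      ∀ v w, G.Adj v w → Disjoint (φ v) (φ w)

/-- Vertices: a hub `none`, together with, for each `m`-subset `S` of `{1,…,2m}`,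
three further vertices `(S,0), (S,1), (S,2)` of a 4-cycle through the hub. -/
abbrev V7 (m : ℕ) := Option ({S : Finset ℕ // S ⊆ Finset.Icc 1 (2 * m) ∧ S.card = m} × Fin 3)

/-- The graph formed from `C(2m,m)` disjoint 4-cycles by identifying one vertex of each:
for each `S`, the 4-cycle is `none, (S,0), (S,1), (S,2)`. -/
def G7 (m : ℕ) : SimpleGraph (V7 m) :=
  SimpleGraph.fromRel (fun x y =>
    match x, y with
    | none, some ⟨_, i⟩ => i = 0 ∨ i = 2
    | some ⟨S, i⟩, some ⟨T, j⟩ => S = T ∧ ((i = 0 ∧ j = 1) ∨ (i = 1 ∧ j = 2))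
    | _, _ => False)

noncomputable def pick7 (S : Finset ℕ) : ℕ := if h : S.Nonempty then S.min' h else 0

lemma pick7_mem {S : Finset ℕ} (h : S.Nonempty) : pick7 S ∈ S := by
  simp only [pick7, dif_pos h]; exact S.min'_mem h

/-- For every `m ≥ 1` there is a bipartite graph that is not `(2m,m)`-choosable:
the graph `G7 m` is bipartite and not `(2m,m)`-choosable. -/
theorem stmt_7 (m : ℕ) (hm : 0 < m) :
    (G7 m).Colorable 2 ∧ ¬ FoldChoosable (G7 m) (2 * m) m := by
  classical
  constructor
  · let f : V7 m → Fin 2 := fun v =>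
      Option.elim v 0 (fun p => if p.2 = 1 then 0 else 1)
    refine (SimpleGraph.Coloring.mk f ?_).colorable
    intro v w hvw
    rw [G7, SimpleGraph.fromRel_adj] at hvw
    obtain ⟨hne, h⟩ := hvw
    rcases v with _ | ⟨S, i⟩ <;> rcases w with _ | ⟨T, j⟩
    · simp at hne
    · rcases h with h | h
      · rcases h with h | h <;> subst h <;> simp [f]
      · exact h.elim
    · rcases h with h | h
      · exact h.elim
      · rcases h with h | h <;> subst h <;> simp [f]
    · rcases h with ⟨hST, h | h⟩ | ⟨hST, h | h⟩ <;>
        obtain ⟨h1, h2⟩ := h <;> subst h1 <;> subst h2 <;> simp [f]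
  · intro hch
    set A : Finset ℕ := Finset.Icc 1 (2 * m) with hAdef
    have hAcard : A.card = 2 * m := by simp [hAdef]
    have hbA : 2 * m + 1 ∉ A := by simp [hAdef]
    set L : V7 m → Finset ℕ := fun v =>
      match v with
      | none => A
      | some ⟨⟨S, _⟩, i⟩ =>
        if i = 0 then A
        else if i = 1 then insert (2 * m + 1) (A.erase (pick7 S))
        else insert (2 * m + 1) (A.erase (pick7 (A \ S))) with hLdef
    have hLcard : ∀ v, (L v).card = 2 * m := by
      intro v
      have key : ∀ x, x ∈ A → (insert (2 * m + 1) (A.erase x)).card = 2 * m := by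
        intro x hx
        rw [Finset.card_insert_of_notMem (fun h => hbA (Finset.mem_of_mem_erase h)),
          Finset.card_erase_of_mem hx, hAcard]
        omega
      rcases v with _ | ⟨⟨S, hS⟩, i⟩
      · exact hAcard
      · have hSne : S.Nonempty := Finset.card_pos.mp (by omega)
        have hS'ne : (A \ S).Nonempty := by
          rw [← Finset.card_pos, Finset.card_sdiff_of_subset hS.1, hAcard, hS.2]; omega
        fin_cases i
        · exact hAcard
        · exact key _ (hS.1 (pick7_mem hSne))
        · exact key _ ((Finset.sdiff_subset) (pick7_mem hS'ne))
    obtain ⟨φ, hsub, hcard, hdisj⟩ := hch L hLcard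
    set S : Finset ℕ := φ none with hSdef
    have hSsub : S ⊆ A := hsub none
    have hScard : S.card = m := hcard none
    have hSne : S.Nonempty := Finset.card_pos.mp (by omega)
    have hS'ne : (A \ S).Nonempty := by
      rw [← Finset.card_pos, Finset.card_sdiff_of_subset hSsub, hAcard, hScard]; omega
    set a := pick7 S with hadef
    have ha : a ∈ S := pick7_mem hSne
    set c := pick7 (A \ S) with hcdef
    have hc : c ∈ A \ S := pick7_mem hS'ne
    set S₀ : {T : Finset ℕ // T ⊆ Finset.Icc 1 (2 * m) ∧ T.card = m} := ⟨S, hSsub, hScard⟩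
    -- adjacencies
    have adj02 : ∀ i : Fin 3, i = 0 ∨ i = 2 → (G7 m).Adj none (some ⟨S₀, i⟩) := by
      intro i hi
      rw [G7, SimpleGraph.fromRel_adj]
      exact ⟨by simp, Or.inl hi⟩
    have adj01 : (G7 m).Adj (some ⟨S₀, 0⟩) (some ⟨S₀, 1⟩) := by
      rw [G7, SimpleGraph.fromRel_adj]
      exact ⟨by simp, Or.inl ⟨rfl, Or.inl ⟨rfl, rfl⟩⟩⟩
    have adj12 : (G7 m).Adj (some ⟨S₀, 1⟩) (some ⟨S₀, 2⟩) := by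
      rw [G7, SimpleGraph.fromRel_adj]
      exact ⟨by simp, Or.inl ⟨rfl, Or.inr ⟨rfl, rfl⟩⟩⟩
    -- φ at (S,0) equals A \ S
    have hv2 : φ (some ⟨S₀, 0⟩) = A \ S := by
      apply Finset.eq_of_subset_of_card_le
      · intro x hx
        rw [Finset.mem_sdiff]
        refine ⟨hsub _ hx, fun hxS => ?_⟩
        exact Finset.disjoint_left.mp (hdisj _ _ (adj02 0 (Or.inl rfl))) hxS hx
      · rw [Finset.card_sdiff_of_subset hSsub, hAcard, hScard, hcard]; omega
    -- 2m+1 ∈ φ at (S,1)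
    have hb3 : 2 * m + 1 ∈ φ (some ⟨S₀, 1⟩) := by
      by_contra hb
      have hsub3 : φ (some ⟨S₀, 1⟩) ⊆ S.erase a := by
        intro x hx
        have hxL : x ∈ insert (2 * m + 1) (A.erase a) := by
          have := hsub _ hx
          simpa [hLdef, hadef] using this
        rw [Finset.mem_insert] at hxL
        rcases hxL with h | h
        · exact absurd (h ▸ hx) hb
        · rw [Finset.mem_erase] at h ⊢
          refine ⟨h.1, ?_⟩
          by_contra hxS
          have : x ∈ A \ S := Finset.mem_sdiff.mpr ⟨h.2, hxS⟩
          rw [← hv2] at this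
          exact Finset.disjoint_left.mp (hdisj _ _ adj01) this hx
      have := Finset.card_le_card hsub3
      rw [hcard, Finset.card_erase_of_mem ha, hScard] at this
      omega
    -- 2m+1 ∈ φ at (S,2)
    have hb4 : 2 * m + 1 ∈ φ (some ⟨S₀, 2⟩) := by
      by_contra hb
      have hsub4 : φ (some ⟨S₀, 2⟩) ⊆ (A \ S).erase c := by
        intro x hx
        have hxL : x ∈ insert (2 * m + 1) (A.erase c) := by
          have := hsub _ hx
          simpa [hLdef, hcdef] using this
        rw [Finset.mem_insert] at hxL
        rcases hxL with h | h
        · exact absurd (h ▸ hx) hb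
        · rw [Finset.mem_erase] at h ⊢
          refine ⟨h.1, Finset.mem_sdiff.mpr ⟨h.2, fun hxS => ?_⟩⟩
          exact Finset.disjoint_left.mp (hdisj _ _ (adj02 2 (Or.inr rfl))) hxS hx
      have := Finset.card_le_card hsub4
      rw [hcard, Finset.card_erase_of_mem hc, Finset.card_sdiff_of_subset hSsub, hAcard, hScard] at this
      omega
    exact Finset.disjoint_left.mp (hdisj _ _ adj12) hb3 hb4
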